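/- Let (C,R) be a directed graph with ℓ = t = 1 that is not strongly connected and has |C'| = 1, and let h : C → ℝ be arbitrary. For i ∈ C'' let U(i) = {k ∈ C : every directed path from k to C' traverses i}, and for j ∈ C'' let C''_{j-inarb} be as defined below. Then the following are equivalent: (A) for all j ∈ C'' and all U ∈ C''_{j-inarb}, ∑_{i ∈ U} h_i ≤ 0; (B) for all i ∈ C'', ∑_{k ∈ U(i)} h_k ≤ 0. -/

import Mathlib

open Finset

/-- Reachability (existence of a directed walk) in the directed graph with arc set `R`. -/
def Reach {c : ℕ} (R : Finset (Fin c × Fin c)) (a b : Fin c) : Prop :=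
  Relation.ReflTransGen (fun x y => (x, y) ∈ R) a b

/-- `p` is a directed path in the graph with arc set `R`. -/
def IsDipath {c : ℕ} (R : Finset (Fin c × Fin c)) (p : List (Fin c)) : Prop :=
  p ≠ [] ∧ p.Nodup ∧ p.Chain' (fun a b => (a, b) ∈ R)

/-- `p` is a directed path from `a` to `b` in the graph with arc set `R`. -/
def IsDipathFromTo {c : ℕ} (R : Finset (Fin c × Fin c)) (p : List (Fin c))
    (a b : Fin c) : Prop :=
  IsDipath R p ∧ p.head? = some a ∧ p.getLast? = some b

/-- There is a directed path from `a` to `b` all of whose intermediate steps stay in `S`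
(for `a ∈ S` this says that there is a directed path from `a` to `b` with vertex set
contained in `S`). -/
def ReachIn {c : ℕ} (R : Finset (Fin c × Fin c)) (S : Finset (Fin c))
    (a b : Fin c) : Prop :=
  Relation.ReflTransGen (fun x y => (x, y) ∈ R ∧ x ∈ S ∧ y ∈ S) a b

/-- The set of arcs of `R` entering the vertex set `U`. -/
def arcsIn {c : ℕ} (R : Finset (Fin c × Fin c)) (U : Finset (Fin c)) :
    Finset (Fin c × Fin c) :=
  R.filter (fun a => a.1 ∉ U ∧ a.2 ∈ U)

/-- The set of arcs of `R` leaving the vertex set `U`. -/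
def arcsOut {c : ℕ} (R : Finset (Fin c × Fin c)) (U : Finset (Fin c)) :
    Finset (Fin c × Fin c) :=
  R.filter (fun a => a.1 ∈ U ∧ a.2 ∉ U)

/-- For a graph whose unique absorbing strong component is `{r}` (so `C'' = C \ {r}`),
`Uset R r i = U(i) = {k ∈ C : every directed path from k to r traverses i}`. -/
noncomputable def Uset {c : ℕ} (R : Finset (Fin c × Fin c)) (r i : Fin c) :
    Finset (Fin c) :=
  @Finset.filter _ (fun k => ∀ p : List (Fin c), IsDipathFromTo R p k r → i ∈ p)
    (Classical.decPred _) Finset.univ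

/-- `U ∈ C''_{j-inarb}`: `U ⊆ C'' = C \ {r}`, every vertex of `U` has a directed path to
`j` with vertex set contained in `U`, and every vertex of `C'' \ U` has a directed path
to `C' = {r}` with vertex set contained in `C \ U`. -/
def Jinarb {c : ℕ} (R : Finset (Fin c × Fin c)) (r j : Fin c)
    (U : Finset (Fin c)) : Prop :=
  U ⊆ Finset.univ.erase r ∧
    (∀ i' ∈ U, ReachIn R U i' j) ∧
    (∀ i' ∈ Finset.univ.erase r \ U, ReachIn R (Finset.univ \ U) i' r)

/-- The vertex set of the strong component of the graph containing `j`. -/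
noncomputable def SCC {c : ℕ} (R : Finset (Fin c × Fin c)) (j : Fin c) :
    Finset (Fin c) :=
  @Finset.filter _ (fun k => Reach R j k ∧ Reach R k j) (Classical.decPred _) Finset.univ

/-- `I` is a subset of `C'' = C \ {r}` such that the sets `U(i)`, `i ∈ I`, are pairwise
disjoint with union `U`. -/
def IsPartitionInto {c : ℕ} (R : Finset (Fin c × Fin c)) (r : Fin c)
    (U I : Finset (Fin c)) : Prop :=
  I ⊆ Finset.univ.erase r ∧
    (↑I : Set (Fin c)).PairwiseDisjoint (fun i => Uset R r i) ∧
    U = I.biUnion (Uset R r)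

/-- `W(j) = ⋃_{U ∈ C''_{j-inarb}} I_U`, where `I_U` is the unique subset of `C''` with
`U = ⋃*_{i ∈ I_U} U(i)` (pairwise disjoint union). -/
def Wset {c : ℕ} (R : Finset (Fin c × Fin c)) (r j : Fin c) : Set (Fin c) :=
  {i | ∃ U I : Finset (Fin c), Jinarb R r j U ∧ IsPartitionInto R r U I ∧ i ∈ I}

/-- `U(C''(j)) = {k ∈ C'' : every directed path from k to r traverses C''(j)}`. -/
noncomputable def UsetSC {c : ℕ} (R : Finset (Fin c × Fin c)) (r j : Fin c) :
    Finset (Fin c) :=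
  @Finset.filter _
    (fun k => ∀ p : List (Fin c), IsDipathFromTo R p k r → ∃ x ∈ p, x ∈ SCC R j)
    (Classical.decPred _) (Finset.univ.erase r)


section Generic
variable {α : Type*}

theorem rtg_of_chain' {rel : α → α → Prop} :
    ∀ (p : List α) {a b : α}, p.Chain' rel → p.head? = some a → p.getLast? = some b →
      Relation.ReflTransGen rel a b := by
  intro p
  induction p with
  | nil => simp
  | cons x t ih =>
    intro a b hc ha hb
    simp only [List.head?_cons, Option.some.injEq] at ha
    subst ha
    cases t with
    | nil =>
      simp only [List.getLast?_singleton, Option.some.injEq] at hb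
      subst hb; exact Relation.ReflTransGen.refl
    | cons y s =>
      simp only [List.Chain', List.isChain_cons_cons] at hc
      exact Relation.ReflTransGen.head hc.1
        (ih hc.2 rfl (by simpa using hb))

theorem rtg_passSet {rel : α → α → Prop} (A : Set α) {a b : α}
    (h : Relation.ReflTransGen rel a b) :
    Relation.ReflTransGen (fun x y => rel x y ∧ x ∉ A ∧ y ∉ A) a b ∨
      ∃ v ∈ A, Relation.ReflTransGen rel v b ∧
        (a = v ∨ ∃ w, Relation.ReflTransGen (fun x y => rel x y ∧ x ∉ A ∧ y ∉ A) a w ∧ rel w v) := by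
  classical
  induction h using Relation.ReflTransGen.head_induction_on with
  | refl => exact Or.inl Relation.ReflTransGen.refl
  | head h' ht ih =>
    rename_i x y
    by_cases hxA : x ∈ A
    · exact Or.inr ⟨x, hxA, Relation.ReflTransGen.head h' ht, Or.inl rfl⟩
    · by_cases hyA : y ∈ A
      · exact Or.inr ⟨y, hyA, ht, Or.inr ⟨x, Relation.ReflTransGen.refl, h'⟩⟩
      · rcases ih with h1 | ⟨v, hvA, hvb, hpre⟩
        · exact Or.inl (Relation.ReflTransGen.head ⟨h', hxA, hyA⟩ h1)
        · refine Or.inr ⟨v, hvA, hvb, Or.inr ?_⟩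
          rcases hpre with rfl | ⟨w, hw1, hw2⟩
          · exact absurd hvA hyA
          · exact ⟨w, Relation.ReflTransGen.head ⟨h', hxA, hyA⟩ hw1, hw2⟩

theorem rtg_to_path [DecidableEq α] {rel : α → α → Prop} {a b : α}
    (h : Relation.ReflTransGen rel a b) :
    ∃ p : List α, p.Nodup ∧ p.Chain' rel ∧ p.head? = some a ∧ p.getLast? = some b ∧
      ∀ x ∈ p, x = a ∨ ∃ y, rel y x := by
  induction h with
  | refl => exact ⟨[a], by simp, List.isChain_singleton a, rfl, rfl, by simp⟩
  | @tail u v hab hbc ih =>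
    obtain ⟨p, hnd, hch, hhd, hlast, hmem⟩ := ih
    by_cases hv : v ∈ p
    · obtain ⟨q, s, rfl⟩ := List.append_of_mem hv
      have hpre : (q ++ [v]) <+: (q ++ v :: s) := ⟨s, by simp⟩
      refine ⟨q ++ [v], hnd.sublist hpre.sublist, hch.prefix hpre, ?_, by simp, ?_⟩
      · have : (q ++ [v]).head? = (q ++ v :: s).head? := by
          cases q <;> simp
        rw [this, hhd]
      · intro x hx
        exact hmem x (hpre.sublist.mem hx)
    · have hpne : p ≠ [] := by rintro rfl; simp at hhd
      refine ⟨p ++ [v], ?_, ?_, ?_, by simp, ?_⟩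
      · simp [List.nodup_append, hnd, hv]
        intro x hx hxv; exact hv (hxv ▸ hx)
      · refine List.isChain_append.mpr ⟨hch, List.isChain_singleton v, ?_⟩
        intro x hx y hy
        simp only [List.head?_cons, Option.mem_def, Option.some.injEq] at hy
        subst hy
        rw [hlast] at hx
        simp only [Option.mem_def, Option.some.injEq] at hx
        subst hx
        exact hbc
      · rw [List.head?_append, hhd]; rfl
      · intro x hx
        rcases List.mem_append.mp hx with hx | hx
        · exact hmem x hx
        · simp only [List.mem_singleton] at hx
          subst hx
          exact Or.inr ⟨u, hbc⟩

end Generic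

section Graph
variable {c : ℕ} {R : Finset (Fin c × Fin c)} {r : Fin c}

/-- There is a walk from `k` to `r` avoiding `i`. -/
def Av (R : Finset (Fin c × Fin c)) (r i k : Fin c) : Prop :=
  ReachIn R (Finset.univ \ {i}) k r

theorem ReachIn.mono' {S T : Finset (Fin c)} (hST : S ⊆ T) {a b : Fin c}
    (h : ReachIn R S a b) : ReachIn R T a b :=
  Relation.ReflTransGen.mono (fun x y hxy => ⟨hxy.1, hST hxy.2.1, hST hxy.2.2⟩) _ _ h

theorem mem_Uset {i k : Fin c} :
    k ∈ Uset R r i ↔ ∀ p : List (Fin c), IsDipathFromTo R p k r → i ∈ p := by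
  rw [Uset,
    @Finset.mem_filter _ (fun k => ∀ p : List (Fin c), IsDipathFromTo R p k r → i ∈ p)
      (Classical.decPred _) Finset.univ k]
  simp

theorem rtg_avoid {A : Set (Fin c)} {T : Finset (Fin c)} (hT : ∀ x : Fin c, x ∉ A → x ∈ T)
    {a b : Fin c}
    (h : Relation.ReflTransGen (fun x y => (x, y) ∈ R ∧ x ∉ A ∧ y ∉ A) a b) :
    ReachIn R T a b :=
  Relation.ReflTransGen.mono (fun x y hxy => ⟨hxy.1, hT x hxy.2.1, hT y hxy.2.2⟩) _ _ h

theorem noAvSelf {i : Fin c} (hir : i ≠ r) : ¬ Av R r i i := by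
  intro hav
  rcases Relation.ReflTransGen.cases_head hav with heq | ⟨y, ⟨_, hmem, _⟩, _⟩
  · exact hir heq
  · simp at hmem

theorem chain'_and_mem {S : Finset (Fin c)} :
    ∀ {p : List (Fin c)}, p.Chain' (fun a b => (a, b) ∈ R) → (∀ x ∈ p, x ∈ S) →
      p.Chain' (fun a b => (a, b) ∈ R ∧ a ∈ S ∧ b ∈ S) := by
  intro p
  induction p with
  | nil => intro _ _; exact List.isChain_nil
  | cons x t ih =>
    intro hch hmem
    cases t with
    | nil => exact List.isChain_singleton x
    | cons y s =>
      simp only [List.Chain', List.isChain_cons_cons] at hch ⊢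
      exact ⟨⟨hch.1, hmem x (by simp), hmem y (by simp)⟩,
        ih hch.2 (fun z hz => hmem z (by simp [hz]))⟩

theorem mem_Uset_iff_not_Av {i k : Fin c} (hir : i ≠ r) :
    k ∈ Uset R r i ↔ ¬ Av R r i k := by
  constructor
  · intro hk hav
    by_cases hki : k = i
    · exact noAvSelf hir (hki ▸ hav)
    · obtain ⟨p, hnd, hch, hhd, hlast, hmem⟩ := rtg_to_path hav
      have hip : i ∉ p := by
        intro hip
        rcases hmem i hip with heq | ⟨y, _, _, hy⟩
        · exact hki heq.symm
        · simp at hy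
      have hpne : p ≠ [] := by rintro rfl; simp at hhd
      exact hip (mem_Uset.mp hk p
        ⟨⟨hpne, hnd, hch.imp (fun a b hab => hab.1)⟩, hhd, hlast⟩)
  · intro hnav
    rw [mem_Uset]
    intro p hp
    by_contra hip
    exact hnav (rtg_of_chain' p
      (chain'_and_mem hp.1.2.2 (fun x hx => by
        simp only [Finset.mem_sdiff, Finset.mem_univ, Finset.mem_singleton, true_and]
        rintro rfl; exact hip hx))
      hp.2.1 hp.2.2)

theorem Uset_self {i : Fin c} : i ∈ Uset R r i :=
  mem_Uset.mpr (fun p hp => by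
    have := hp.2.1
    exact List.mem_of_mem_head? (by rw [this]; rfl))

theorem Av_r {i : Fin c} : Av R r i r := Relation.ReflTransGen.refl

theorem Uset_subset_Uset {i i' : Fin c} (hir : i ≠ r) (hi'r : i' ≠ r)
    (hii' : ¬ Av R r i' i) : Uset R r i ⊆ Uset R r i' := by
  intro x hx
  rw [mem_Uset_iff_not_Av hi'r]
  intro hav
  rcases rtg_passSet ({i} : Set (Fin c)) hav with h1 | ⟨v, hv, hvr, -⟩
  · refine (mem_Uset_iff_not_Av hir).mp hx (rtg_avoid ?_
      (Relation.ReflTransGen.mono (fun a b hab => ⟨hab.1.1, hab.2.1, hab.2.2⟩) _ _ h1))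
    intro z hz
    simp only [Set.mem_singleton_iff] at hz
    simp [Finset.mem_sdiff, hz]
  · rw [Set.mem_singleton_iff] at hv
    subst hv
    exact hii' hvr

theorem laminar_key (hreach : ∀ k : Fin c, Reach R k r) {i i' m : Fin c}
    (hir : i ≠ r) (hi'r : i' ≠ r)
    (hm : m ∈ Uset R r i) (hm' : m ∈ Uset R r i') :
    ¬ Av R r i' i ∨ ¬ Av R r i i' := by
  by_contra hcon
  push_neg at hcon
  obtain ⟨hAv1, hAv2⟩ := hcon
  have hii : i ≠ i' := by rintro rfl; exact noAvSelf hir hAv1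
  have hmAv : ¬ Av R r i m := (mem_Uset_iff_not_Av hir).mp hm
  have hmAv' : ¬ Av R r i' m := (mem_Uset_iff_not_Av hi'r).mp hm'
  have hmi : m ≠ i := by rintro rfl; exact hmAv' hAv1
  have hmi' : m ≠ i' := by rintro rfl; exact hmAv hAv2
  have hw : Relation.ReflTransGen (fun x y => (x, y) ∈ R) m r := hreach m
  rcases rtg_passSet ({i, i'} : Set (Fin c)) hw with h1 | ⟨v, hv, -, hpre⟩
  · refine hmAv (rtg_avoid ?_ h1)
    intro z hz
    simp only [Set.mem_insert_iff, Set.mem_singleton_iff, not_or] at hz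
    simp [Finset.mem_sdiff, hz.1]
  · have hv' : v = i ∨ v = i' := by simpa using hv
    rcases hpre with heq | ⟨w, hwk, hwv⟩
    · rcases hv' with rfl | rfl
      · exact hmi heq
      · exact hmi' heq
    · have hwA : ¬ w = i ∧ ¬ w = i' := by
        rcases Relation.ReflTransGen.cases_tail hwk with heq | ⟨y, _, hy⟩
        · subst heq; exact ⟨hmi, hmi'⟩
        · have := hy.2.2
          simpa using this
      have esc : ∀ vv uu : Fin c, (uu = i ∨ uu = i') → vv ≠ uu → (w, vv) ∈ R →
          Av R r uu vv → Av R r uu m := by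
        intro vv uu huu hvu hR hAvv
        have hzT : ∀ z : Fin c, z ∉ ({i, i'} : Set (Fin c)) → z ∈ Finset.univ \ {uu} := by
          intro z hz
          simp only [Set.mem_insert_iff, Set.mem_singleton_iff, not_or] at hz
          rcases huu with rfl | rfl <;> simp [Finset.mem_sdiff, hz.1, hz.2]
        have hpre1 : ReachIn R (Finset.univ \ {uu}) m w := rtg_avoid hzT hwk
        have hwu : w ≠ uu := by
          rcases huu with rfl | rfl
          · exact hwA.1
          · exact hwA.2
        have hstep : ReachIn R (Finset.univ \ {uu}) w vv :=
          Relation.ReflTransGen.single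
            ⟨hR, by simp [Finset.mem_sdiff, hwu], by simp [Finset.mem_sdiff, hvu]⟩
        exact (hpre1.trans hstep).trans hAvv
      rcases hv' with rfl | rfl
      · exact hmAv' (esc v i' (Or.inr rfl) hii hwv hAv1)
      · exact hmAv (esc v i (Or.inl rfl) (Ne.symm hii) hwv hAv2)

theorem laminar (hreach : ∀ k : Fin c, Reach R k r) {i i' x : Fin c}
    (hir : i ≠ r) (hi'r : i' ≠ r)
    (hx : x ∈ Uset R r i) (hx' : x ∈ Uset R r i') :
    Uset R r i ⊆ Uset R r i' ∨ Uset R r i' ⊆ Uset R r i := by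
  rcases laminar_key hreach hir hi'r hx hx' with h | h
  · exact Or.inl (Uset_subset_Uset hir hi'r h)
  · exact Or.inr (Uset_subset_Uset hi'r hir h)

theorem reach_in_Uset (hreach : ∀ k : Fin c, Reach R k r) {i : Fin c} (hir : i ≠ r) :
    ∀ k ∈ Uset R r i, ReachIn R (Uset R r i) k i := by
  intro k hk
  have h : Relation.ReflTransGen (fun x y => (x, y) ∈ R) k r := hreach k
  revert hk
  induction h using Relation.ReflTransGen.head_induction_on with
  | refl =>
    intro hk
    exact absurd Av_r ((mem_Uset_iff_not_Av hir).mp hk)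
  | head h' ht ih =>
    rename_i x y
    intro hx
    by_cases hxi : x = i
    · subst hxi; exact Relation.ReflTransGen.refl
    · have hyAv : ¬ Av R r i y := by
        by_cases hyi : y = i
        · subst hyi; exact noAvSelf hir
        · intro hav
          exact (mem_Uset_iff_not_Av hir).mp hx
            (Relation.ReflTransGen.head
              ⟨h', by simp [Finset.mem_sdiff, hxi], by simp [Finset.mem_sdiff, hyi]⟩ hav)
      have hy : y ∈ Uset R r i := (mem_Uset_iff_not_Av hir).mpr hyAv
      exact Relation.ReflTransGen.head ⟨h', hx, hy⟩ (ih hy)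

theorem avoid_outside {i : Fin c} (hir : i ≠ r) :
    ∀ x : Fin c, Av R r i x → ReachIn R (Finset.univ \ Uset R r i) x r := by
  intro x hx
  induction hx using Relation.ReflTransGen.head_induction_on with
  | refl => exact Relation.ReflTransGen.refl
  | head h' ht ih =>
    rename_i x y
    refine Relation.ReflTransGen.head ⟨h'.1, ?_, ?_⟩ ih
    · refine Finset.mem_sdiff.mpr ⟨Finset.mem_univ _, fun hmem => ?_⟩
      exact (mem_Uset_iff_not_Av hir).mp hmem (Relation.ReflTransGen.head h' ht)
    · refine Finset.mem_sdiff.mpr ⟨Finset.mem_univ _, fun hmem => ?_⟩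
      exact (mem_Uset_iff_not_Av hir).mp hmem ht

theorem Jinarb_Uset (hreach : ∀ k : Fin c, Reach R k r) {i : Fin c} (hir : i ≠ r) :
    Jinarb R r i (Uset R r i) := by
  refine ⟨?_, ?_, ?_⟩
  · intro k hk
    refine Finset.mem_erase.mpr ⟨?_, Finset.mem_univ _⟩
    rintro rfl
    exact (mem_Uset_iff_not_Av hir).mp hk Av_r
  · exact reach_in_Uset hreach hir
  · intro x hx
    have hxU : x ∉ Uset R r i := (Finset.mem_sdiff.mp hx).2
    have hav : Av R r i x := by
      by_contra hna
      exact hxU ((mem_Uset_iff_not_Av hir).mpr hna)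
    exact avoid_outside hir x hav

theorem Uset_subset_of_Jinarb {j : Fin c} {U : Finset (Fin c)} (hJ : Jinarb R r j U)
    {i : Fin c} (hi : i ∈ U) : Uset R r i ⊆ U := by
  have hir : i ≠ r := (Finset.mem_erase.mp (hJ.1 hi)).1
  intro x hx
  by_contra hxU
  have hxr : x ≠ r := by
    rintro rfl
    exact (mem_Uset_iff_not_Av hir).mp hx Av_r
  have hmem : x ∈ Finset.univ.erase r \ U :=
    Finset.mem_sdiff.mpr ⟨Finset.mem_erase.mpr ⟨hxr, Finset.mem_univ _⟩, hxU⟩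
  have h1 := hJ.2.2 x hmem
  have hsub : Finset.univ \ U ⊆ Finset.univ \ ({i} : Finset (Fin c)) :=
    Finset.sdiff_subset_sdiff (Finset.Subset.refl _) (Finset.singleton_subset_iff.mpr hi)
  exact (mem_Uset_iff_not_Av hir).mp hx (h1.mono' hsub)

theorem sum_le_of_closed (hreach : ∀ k : Fin c, Reach R k r) (h : Fin c → ℝ)
    (hB : ∀ i : Fin c, i ≠ r → ∑ k ∈ Uset R r i, h k ≤ 0) :
    ∀ U : Finset (Fin c), (∀ i ∈ U, i ≠ r ∧ Uset R r i ⊆ U) → ∑ k ∈ U, h k ≤ 0 := by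
  intro U
  induction U using Finset.strongInduction with
  | _ U ih =>
    intro hU
    rcases U.eq_empty_or_nonempty with rfl | hne
    · simp
    · obtain ⟨i, hiU, hmax⟩ := U.exists_max_image (fun i => (Uset R r i).card) hne
      obtain ⟨hir, hsub⟩ := hU i hiU
      have hkey : ∀ k ∈ U \ Uset R r i, k ≠ r ∧ Uset R r k ⊆ U \ Uset R r i := by
        intro k hk
        obtain ⟨hkU, hkNi⟩ := Finset.mem_sdiff.mp hk
        obtain ⟨hkr, hksub⟩ := hU k hkU
        refine ⟨hkr, fun x hx => Finset.mem_sdiff.mpr ⟨hksub hx, fun hxi => ?_⟩⟩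
        rcases laminar hreach hkr hir hx hxi with hss | hss
        · exact hkNi (hss Uset_self)
        · have heq := Finset.eq_of_subset_of_card_le hss (hmax k hkU)
          exact hkNi (heq ▸ Uset_self)
      have hlt : U \ Uset R r i ⊂ U :=
        Finset.sdiff_ssubset hsub ⟨i, Uset_self⟩
      calc ∑ k ∈ U, h k
          = ∑ k ∈ U \ Uset R r i, h k + ∑ k ∈ Uset R r i, h k :=
            (Finset.sum_sdiff hsub).symm
        _ ≤ 0 + 0 := add_le_add (ih _ hlt hkey) (hB i hir)
        _ = 0 := by ring

end Graph

theorem stmt13' {c : ℕ}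
    (R : Finset (Fin c × Fin c))
    (r : Fin c)
    (hreach : ∀ k : Fin c, Reach R k r)
    (h : Fin c → ℝ) :
    (∀ j : Fin c, j ≠ r → ∀ U : Finset (Fin c), Jinarb R r j U → ∑ i ∈ U, h i ≤ 0) ↔
      (∀ i : Fin c, i ≠ r → ∑ k ∈ Uset R r i, h k ≤ 0) := by
  constructor
  · intro hA i hir
    exact hA i hir (Uset R r i) (Jinarb_Uset hreach hir)
  · intro hB j hjr U hU
    refine sum_le_of_closed hreach h hB U (fun i hi => ?_)
    have hir : i ≠ r := (Finset.mem_erase.mp (hU.1 hi)).1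
    exact ⟨hir, Uset_subset_of_Jinarb hU hi⟩

theorem stmt13 {c : ℕ}
    (R : Finset (Fin c × Fin c)) (hloop : ∀ v : Fin c, (v, v) ∉ R)
    -- `{r} = C'` is the vertex set of the unique absorbing strong component (`ℓ = t = 1`):
    (r : Fin c)
    (habs : ∀ p ∈ R, p.1 ≠ r)
    (hreach : ∀ k : Fin c, Reach R k r)
    (hweak : ∀ a b : Fin c,
      Relation.ReflTransGen (fun x y => (x, y) ∈ R ∨ (y, x) ∈ R) a b)
    (hnsc : ¬ ∀ a b : Fin c, Reach R a b)
    (h : Fin c → ℝ) :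
    (∀ j : Fin c, j ≠ r → ∀ U : Finset (Fin c), Jinarb R r j U → ∑ i ∈ U, h i ≤ 0) ↔
      (∀ i : Fin c, i ≠ r → ∑ k ∈ Uset R r i, h k ≤ 0) := by
  exact stmt13' R r hreach h
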